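/- Let R be a commutative ring with identity, let n be a positive integer, let m ≥ 3 be an odd integer, and let a_{ij} ∈ R for i = 1,…,m and j = 1,…,n. Then the sum over all (m−1)-tuples (σ₁,…,σ_{m−1}) of permutations of {1,…,n} of ε(σ₁⋯σ_{m−1}) times ∏_{1≤i<j≤n} (a_{mj}·∏_{s=1}^{m−1} a_{s,σ_s(j)} − a_{mi}·∏_{s=1}^{m−1} a_{s,σ_s(i)}) equals ∏_{1≤i<j≤n} (a_{1j}−a_{1i})⋯(a_{mj}−a_{mi}). -/

import Mathlib

open Finset Equiv Matrix

private lemma detv {R : Type*} [CommRing R] {n : ℕ} (v : Fin n → R) :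
    (Matrix.vandermonde v).det
      = ∑ π : Equiv.Perm (Fin n), ((Equiv.Perm.sign π : ℤ) : R) * ∏ i, v (π i) ^ (i : ℕ) := by
  rw [Matrix.det_apply]
  refine Finset.sum_congr rfl fun π _ => ?_
  rw [Units.smul_def, zsmul_eq_mul]
  simp [Matrix.vandermonde]

private lemma detv' {R : Type*} [CommRing R] {n : ℕ} (v : Fin n → R) (π : Equiv.Perm (Fin n)) :
    ∑ τ : Equiv.Perm (Fin n), ((Equiv.Perm.sign τ : ℤ) : R) * ∏ i, v (τ (π i)) ^ (i : ℕ)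
      = ((Equiv.Perm.sign π : ℤ) : R) * (Matrix.vandermonde v).det := by
  rw [detv, Finset.mul_sum]
  refine (Fintype.sum_equiv (Equiv.mulRight π⁻¹)
    (fun τ => ((Equiv.Perm.sign π : ℤ) : R) *
      (((Equiv.Perm.sign τ : ℤ) : R) * ∏ i, v (τ i) ^ (i : ℕ))) _ fun τ => ?_).symm
  simp only [Equiv.coe_mulRight, Equiv.Perm.mul_apply, Equiv.Perm.inv_def, Equiv.symm_apply_apply, _root_.map_mul,
    Equiv.Perm.sign_inv, Equiv.Perm.sign_symm]
  push_cast
  ring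

/-- Lemma 2.1: for an odd number `m+1 ≥ 3` of rows (`m` even, `m ≥ 2`). -/
theorem stmt0 {R : Type*} [CommRing R] (n m : ℕ) (hn : 0 < n) (hm : Even m) (hm2 : 2 ≤ m)
    (a : Fin (m + 1) → Fin n → R) :
    ∑ σ : Fin m → Equiv.Perm (Fin n),
      (((∏ s, Equiv.Perm.sign (σ s) : ℤˣ) : ℤ)) •
        ∏ i : Fin n, ∏ j ∈ Finset.Ioi i,
          (a (Fin.last m) j * ∏ s : Fin m, a s.castSucc ((σ s) j)
            - a (Fin.last m) i * ∏ s : Fin m, a s.castSucc ((σ s) i))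
      = ∏ i : Fin n, ∏ j ∈ Finset.Ioi i, ∏ s : Fin (m + 1), (a s j - a s i) := by
  have hsgn : ∀ π : Equiv.Perm (Fin n), ((Equiv.Perm.sign π : ℤ) : R) ^ m = 1 := by
    intro π
    rcases Int.units_eq_one_or (Equiv.Perm.sign π) with h | h <;>
      simp [h, hm.neg_one_pow]
  calc
    ∑ σ : Fin m → Equiv.Perm (Fin n),
      (((∏ s, Equiv.Perm.sign (σ s) : ℤˣ) : ℤ)) •
        ∏ i : Fin n, ∏ j ∈ Finset.Ioi i,
          (a (Fin.last m) j * ∏ s : Fin m, a s.castSucc ((σ s) j)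
            - a (Fin.last m) i * ∏ s : Fin m, a s.castSucc ((σ s) i))
      = ∑ σ : Fin m → Equiv.Perm (Fin n), ∑ π : Equiv.Perm (Fin n),
          (∏ s, ((Equiv.Perm.sign (σ s) : ℤ) : R)) *
            (((Equiv.Perm.sign π : ℤ) : R) *
              ∏ i : Fin n,
                (a (Fin.last m) (π i) * ∏ s : Fin m, a s.castSucc ((σ s) (π i))) ^ (i : ℕ)) := by
        refine Finset.sum_congr rfl fun σ _ => ?_
        rw [← Matrix.det_vandermonde
          (fun j => a (Fin.last m) j * ∏ s : Fin m, a s.castSucc ((σ s) j)),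
          detv, zsmul_eq_mul, Finset.mul_sum]
        refine Finset.sum_congr rfl fun π _ => ?_
        push_cast
        ring
    _ = ∑ π : Equiv.Perm (Fin n), ∑ σ : Fin m → Equiv.Perm (Fin n),
          (∏ s, ((Equiv.Perm.sign (σ s) : ℤ) : R)) *
            (((Equiv.Perm.sign π : ℤ) : R) *
              ∏ i : Fin n,
                (a (Fin.last m) (π i) * ∏ s : Fin m, a s.castSucc ((σ s) (π i))) ^ (i : ℕ)) :=
        Finset.sum_comm
    _ = ∑ π : Equiv.Perm (Fin n),
          ((Equiv.Perm.sign π : ℤ) : R) * (∏ i : Fin n, a (Fin.last m) (π i) ^ (i : ℕ)) *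
            ∏ s : Fin m, (Matrix.vandermonde (a s.castSucc)).det := by
        refine Finset.sum_congr rfl fun π _ => ?_
        have step1 : ∀ σ : Fin m → Equiv.Perm (Fin n),
            (∏ s, ((Equiv.Perm.sign (σ s) : ℤ) : R)) *
            (((Equiv.Perm.sign π : ℤ) : R) *
              ∏ i : Fin n,
                (a (Fin.last m) (π i) * ∏ s : Fin m, a s.castSucc ((σ s) (π i))) ^ (i : ℕ))
            = ((Equiv.Perm.sign π : ℤ) : R) * (∏ i : Fin n, a (Fin.last m) (π i) ^ (i : ℕ)) *
              ∏ s : Fin m, (((Equiv.Perm.sign (σ s) : ℤ) : R) *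
                ∏ i : Fin n, a s.castSucc ((σ s) (π i)) ^ (i : ℕ)) := by
          intro σ
          simp only [mul_pow, Finset.prod_mul_distrib, ← Finset.prod_pow]
          rw [Finset.prod_comm (f := fun i (s : Fin m) => a s.castSucc ((σ s) (π i)) ^ (i : ℕ))]
          ring
        simp only [step1]
        rw [← Finset.mul_sum, ← Fintype.prod_sum
          (f := fun (s : Fin m) (τ : Equiv.Perm (Fin n)) =>
            ((Equiv.Perm.sign τ : ℤ) : R) * ∏ i : Fin n, a s.castSucc (τ (π i)) ^ (i : ℕ))]
        have step2 : ∀ s : Fin m,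
            (∑ τ : Equiv.Perm (Fin n), ((Equiv.Perm.sign τ : ℤ) : R) *
              ∏ i : Fin n, a s.castSucc (τ (π i)) ^ (i : ℕ))
            = ((Equiv.Perm.sign π : ℤ) : R) * (Matrix.vandermonde (a s.castSucc)).det :=
          fun s => detv' (a s.castSucc) π
        simp only [step2]
        rw [Finset.prod_mul_distrib, Finset.prod_const, Finset.card_univ, Fintype.card_fin,
          hsgn π, one_mul]
    _ = (Matrix.vandermonde (a (Fin.last m))).det *
          ∏ s : Fin m, (Matrix.vandermonde (a s.castSucc)).det := by
        rw [← Finset.sum_mul, ← detv]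
    _ = ∏ s : Fin (m + 1), (Matrix.vandermonde (a s)).det := by
        rw [Fin.prod_univ_castSucc, mul_comm]
    _ = ∏ i : Fin n, ∏ j ∈ Finset.Ioi i, ∏ s : Fin (m + 1), (a s j - a s i) := by
        simp only [Matrix.det_vandermonde]
        rw [Finset.prod_comm]
        refine Finset.prod_congr rfl fun i _ => Finset.prod_comm
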